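/- For all integers n and q with 2 ≤ q ≤ n, the competition number of the Hamming graph H(n,q) satisfies k(H(n,q)) ≤ (n−q)·q^{n−1} + k(H(q,q)). -/

import Mathlib

open SimpleGraph

/-- The Hamming graph H(n,q): vertices are `Fin n → Fin q`, adjacent iff Hamming distance 1. -/
def hammingGraph (n q : ℕ) : SimpleGraph (Fin n → Fin q) where
  Adj x y := hammingDist x y = 1
  symm := by constructor; intro x y h; rwa [hammingDist_comm]
  loopless := by constructor; intro x h; simp [hammingDist_self] at h

/-- The competition graph of a digraph `D`. -/
def competitionGraph {V : Type*} (D : V → V → Prop) : SimpleGraph V where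
  Adj u v := u ≠ v ∧ ∃ x, D u x ∧ D v x
  symm := by constructor; rintro u v ⟨h, x, hu, hv⟩; exact ⟨h.symm, x, hv, hu⟩
  loopless := by constructor; rintro u ⟨h, _⟩; exact h rfl

/-- A digraph is acyclic iff it has no directed cycle. -/
def IsAcyclicDigraph {V : Type*} (D : V → V → Prop) : Prop :=
  ∀ v, ¬ Relation.TransGen D v v

/-- `G` together with `k` isolated vertices. -/
def addIsolated {V : Type*} (G : SimpleGraph V) (k : ℕ) : SimpleGraph (V ⊕ Fin k) where
  Adj x y := ∃ u v, x = Sum.inl u ∧ y = Sum.inl v ∧ G.Adj u v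
  symm := by constructor; rintro x y ⟨u, v, rfl, rfl, h⟩; exact ⟨v, u, rfl, rfl, h.symm⟩
  loopless := by constructor; rintro x ⟨u, v, rfl, h, hadj⟩; injection h with h; subst h; exact hadj.ne rfl

/-- The competition number of a graph. -/
noncomputable def competitionNumber {V : Type*} (G : SimpleGraph V) : ℕ :=
  sInf {k | ∃ D : (V ⊕ Fin k) → (V ⊕ Fin k) → Prop,
    IsAcyclicDigraph D ∧ competitionGraph D = addIsolated G k}

/-- The maximal clique `S_j(p)` of `H(n,q)`: all tuples agreeing with `p` off coordinate `j`. -/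
def Sset {n q : ℕ} (j : Fin n) (p : Fin n → Fin q) : Set (Fin n → Fin q) :=
  {x | ∀ i, i ≠ j → x i = p i}

/-- A maximal clique of a graph. -/
def IsMaxClique {V : Type*} (G : SimpleGraph V) (S : Set V) : Prop :=
  G.IsClique S ∧ ∀ T, G.IsClique T → S ⊆ T → S = T

/-- An edge clique cover. -/
def IsEdgeCliqueCover {V : Type*} (G : SimpleGraph V) (F : Finset (Finset V)) : Prop :=
  (∀ S ∈ F, G.IsClique (S : Set V)) ∧ ∀ u v, G.Adj u v → ∃ S ∈ F, u ∈ S ∧ v ∈ S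

/-- In-neighborhood of a vertex in a digraph. -/
def inNbhd {V : Type*} (D : V → V → Prop) (v : V) : Set V := {w | D w v}

lemma ham_adj_of {n q : ℕ} {u v : Fin n → Fin q} (j : Fin n) (hne : u ≠ v)
    (hoff : ∀ i, i ≠ j → u i = v i) : (hammingGraph n q).Adj u v := by
  have hj : u j ≠ v j := by
    intro h
    refine hne (funext fun i => ?_)
    by_cases hij : i = j
    · rw [hij, h]
    · exact hoff i hij
  show hammingDist u v = 1
  have : ({i | u i ≠ v i} : Finset (Fin n)) = {j} := by
    ext i
    simp only [Finset.mem_filter, Finset.mem_univ, true_and, Finset.mem_singleton]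
    constructor
    · intro h; by_contra hij; exact h (hoff i hij)
    · intro h; rw [h]; exact hj
  rw [hammingDist, this, Finset.card_singleton]

lemma ham_exists_of_adj {n q : ℕ} {u v : Fin n → Fin q} (h : (hammingGraph n q).Adj u v) :
    ∃ j, u j ≠ v j ∧ ∀ i, i ≠ j → u i = v i := by
  have h1 : hammingDist u v = 1 := h
  rw [hammingDist, Finset.card_eq_one] at h1
  obtain ⟨j, hj⟩ := h1
  refine ⟨j, ?_, ?_⟩
  · have : j ∈ ({i | u i ≠ v i} : Finset (Fin n)) := hj ▸ Finset.mem_singleton_self j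
    simpa using this
  · intro i hij
    by_contra hne
    have : i ∈ ({i | u i ≠ v i} : Finset (Fin n)) := by simpa using hne
    rw [hj] at this
    exact hij (Finset.mem_singleton.mp this)

/-- Generic realization lemma. -/
lemma realize_of_cover {V : Type*} (G : SimpleGraph V) (k : ℕ) {C : Type*}
    (cl : C → Set V) (host : C → V ⊕ Fin k) (hinj : Function.Injective host)
    (hclq : ∀ c, G.IsClique (cl c))
    (hcov : ∀ u v, G.Adj u v → ∃ c, u ∈ cl c ∧ v ∈ cl c)
    (ρ : V → ℕ) (N : ℕ) (hρ : ∀ v, ρ v < N)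
    (hrank : ∀ c u w, u ∈ cl c → host c = Sum.inl w → ρ u < ρ w) :
    ∃ D : (V ⊕ Fin k) → (V ⊕ Fin k) → Prop,
      IsAcyclicDigraph D ∧ competitionGraph D = addIsolated G k := by
  classical
  set D : (V ⊕ Fin k) → (V ⊕ Fin k) → Prop :=
    fun x y => ∃ c, (∃ v, x = Sum.inl v ∧ v ∈ cl c) ∧ y = host c with hD
  set ρ' : V ⊕ Fin k → ℕ := Sum.elim ρ (fun _ => N) with hρ'
  have hstep : ∀ x y, D x y → ρ' x < ρ' y := by
    rintro x y ⟨c, ⟨v, rfl, hv⟩, rfl⟩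
    cases hh : host c with
    | inl w =>
      have := hrank c v w hv hh
      simpa [hρ', hh] using this
    | inr e => simpa [hρ', hh] using hρ v
  refine ⟨D, ?_, ?_⟩
  · intro x hx
    have : ∀ a b, Relation.TransGen D a b → ρ' a < ρ' b := by
      intro a b h
      induction h with
      | single h' => exact hstep _ _ h'
      | tail _ h' ih => exact ih.trans (hstep _ _ h')
    exact absurd (this x x hx) (lt_irrefl _)
  · ext x y
    show (x ≠ y ∧ ∃ z, D x z ∧ D y z) ↔ ∃ u v, x = Sum.inl u ∧ y = Sum.inl v ∧ G.Adj u v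
    constructor
    · rintro ⟨hne, z, ⟨c₁, ⟨v₁, hx1, hv₁⟩, hz1⟩, ⟨c₂, ⟨v₂, hy2, hv₂⟩, hz2⟩⟩
      subst hx1; subst hy2
      have hc : c₂ = c₁ := hinj (hz2.symm.trans hz1)
      subst hc
      refine ⟨v₁, v₂, rfl, rfl, hclq _ hv₁ hv₂ ?_⟩
      intro h; exact hne (by rw [h])
    · rintro ⟨u, v, rfl, rfl, hadj⟩
      obtain ⟨c, hu, hv⟩ := hcov u v hadj
      exact ⟨by simpa using hadj.ne, host c, ⟨c, ⟨u, rfl, hu⟩, rfl⟩, ⟨c, ⟨v, rfl, hv⟩, rfl⟩⟩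

/-- In an acyclic digraph the "downset rank" strictly increases along arcs. -/
lemma ord_lt_of_arc {W : Type*} [Finite W] {D : W → W → Prop} (hac : IsAcyclicDigraph D)
    {u x : W} (h : D u x) :
    {t | Relation.TransGen D t u}.ncard < {t | Relation.TransGen D t x}.ncard := by
  apply Set.ncard_lt_ncard
  · constructor
    · intro t ht
      exact Relation.TransGen.tail ht h
    · intro hsub
      have hu : u ∈ {t | Relation.TransGen D t x} := Relation.TransGen.single h
      have := hsub hu
      exact hac u this
  · exact Set.toFinite _

/-- Index type for the maximal cliques of `H(q,q)`. -/
def MCt (q : ℕ) : Type := Σ j : Fin q, ({i : Fin q // i ≠ j} → Fin q)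

instance (q : ℕ) : Fintype (MCt q) := by unfold MCt; infer_instance
instance (q : ℕ) : DecidableEq (MCt q) := by unfold MCt; exact Sigma.instDecidableEqSigma

/-- The maximal clique of `H(q,q)` with index `m`. -/
def Mcl {q : ℕ} (m : MCt q) : Set (Fin q → Fin q) :=
  {a | ∀ i, ∀ h : i ≠ m.1, a i = m.2 ⟨i, h⟩}

def mcOf {q : ℕ} (j : Fin q) (u : Fin q → Fin q) : MCt q := ⟨j, fun i => u i.1⟩

lemma mem_mcOf {q : ℕ} (j : Fin q) (u : Fin q → Fin q) : u ∈ Mcl (mcOf j u) :=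
  fun _ _ => rfl

lemma mem_mcOf_of_agree {q : ℕ} {j : Fin q} {u v : Fin q → Fin q}
    (h : ∀ i, i ≠ j → v i = u i) : v ∈ Mcl (mcOf j u) := fun i hi => h i hi

lemma Mcl_agree {q : ℕ} {m : MCt q} {a b : Fin q → Fin q} (ha : a ∈ Mcl m) (hb : b ∈ Mcl m)
    {i : Fin q} (hi : i ≠ m.1) : a i = b i := (ha i hi).trans (hb i hi).symm

lemma mem_Mcl_of_agree {q : ℕ} {m : MCt q} {a b : Fin q → Fin q} (ha : a ∈ Mcl m)
    (h : ∀ i, i ≠ m.1 → b i = a i) : b ∈ Mcl m :=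
  fun i hi => (h i hi).trans (ha i hi)

lemma Mcl_diff_at {q : ℕ} {m : MCt q} {a b : Fin q → Fin q} (ha : a ∈ Mcl m) (hb : b ∈ Mcl m)
    (hne : a ≠ b) : a m.1 ≠ b m.1 := by
  intro h
  refine hne (funext fun i => ?_)
  by_cases hi : i = m.1
  · rw [hi]; exact h
  · exact Mcl_agree ha hb hi

lemma Mcl_adj {q : ℕ} {m : MCt q} {a b : Fin q → Fin q} (ha : a ∈ Mcl m) (hb : b ∈ Mcl m)
    (hne : a ≠ b) : (hammingGraph q q).Adj a b :=
  ham_adj_of m.1 hne (fun i hi => Mcl_agree ha hb hi)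

/-- Fill a maximal clique index with a concrete value at the free coordinate. -/
def mcFill {q : ℕ} (m : MCt q) (z : Fin q) : Fin q → Fin q :=
  fun i => if h : i = m.1 then z else m.2 ⟨i, h⟩

lemma mcFill_mem {q : ℕ} (m : MCt q) (z : Fin q) : mcFill m z ∈ Mcl m := by
  intro i hi
  simp [mcFill, hi]

lemma mcFill_at {q : ℕ} (m : MCt q) (z : Fin q) : mcFill m z m.1 = z := by
  simp [mcFill]

/-- Two distinct vertices lie in a unique maximal clique. -/
lemma Mcl_unique {q : ℕ} {m₁ m₂ : MCt q} {u₁ v₁ u₂ v₂ : Fin q → Fin q}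
    (hu₁ : u₁ ∈ Mcl m₁) (hv₁ : v₁ ∈ Mcl m₁) (hne₁ : u₁ ≠ v₁)
    (hu₂ : u₂ ∈ Mcl m₂) (hv₂ : v₂ ∈ Mcl m₂) (hne₂ : u₂ ≠ v₂)
    (hadj : ∀ s t : Fin q → Fin q, (s = u₁ ∨ s = v₁) → (t = u₂ ∨ t = v₂) →
      t = s ∨ (hammingGraph q q).Adj t s) : m₁ = m₂ := by
  -- step 1 : u₂ and v₂ belong to Mcl m₁
  have key : ∀ t : Fin q → Fin q, (t = u₂ ∨ t = v₂) → t ∈ Mcl m₁ := by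
    intro t ht
    rcases hadj u₁ t (Or.inl rfl) ht with h1 | h1
    · rw [h1]; exact hu₁
    rcases hadj v₁ t (Or.inr rfl) ht with h2 | h2
    · rw [h2]; exact hv₁
    obtain ⟨c, hc, hoff⟩ := ham_exists_of_adj h1
    by_cases hcj : c = m₁.1
    · exact mem_Mcl_of_agree hu₁ (fun i hi => hoff i (fun hic => hi (hic ▸ hcj)))
    · exfalso
      obtain ⟨c', hc', hoff'⟩ := ham_exists_of_adj h2
      have hdj : u₁ m₁.1 ≠ v₁ m₁.1 := Mcl_diff_at hu₁ hv₁ hne₁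
      -- t differs from v₁ at c and at m₁.1
      have h3 : t c ≠ v₁ c := by
        have : u₁ c = v₁ c := Mcl_agree hu₁ hv₁ hcj
        rw [← this]; exact hc
      have h4 : t m₁.1 = u₁ m₁.1 := hoff m₁.1 (fun h => hcj h.symm)
      have h5 : t m₁.1 ≠ v₁ m₁.1 := by rw [h4]; exact hdj
      by_cases hcc : c = c'
      · -- then m₁.1 ≠ c', use hoff'
        have : m₁.1 ≠ c' := fun h => hcj (hcc.trans h.symm)
        exact h5 (hoff' m₁.1 this)
      · exact h3 (hoff' c hcc)
  have hu₂1 : u₂ ∈ Mcl m₁ := key u₂ (Or.inl rfl)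
  have hv₂1 : v₂ ∈ Mcl m₁ := key v₂ (Or.inr rfl)
  -- step 2: conclude
  have hj : m₁.1 = m₂.1 := by
    by_contra hj
    refine hne₂ (funext fun i => ?_)
    by_cases h1 : i = m₁.1
    · subst h1; exact Mcl_agree hu₂ hv₂ hj
    · exact Mcl_agree hu₂1 hv₂1 h1
  obtain ⟨j₁, f₁⟩ := m₁
  obtain ⟨j₂, f₂⟩ := m₂
  simp only at hj
  subst hj
  have : f₁ = f₂ := by
    funext i
    have h1 : u₂ i.1 = f₁ i := by
      have := hu₂1 i.1 i.2; simpa using this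
    have h2 : u₂ i.1 = f₂ i := by
      have := hu₂ i.1 i.2; simpa using this
    rw [← h1, h2]
  rw [this]


/-- Cardinality helper: funs on a punctured finite type. -/
lemma card_punctured_fun {α β : Type*} [Fintype α] [DecidableEq α] [Fintype β] (j : α) :
    Fintype.card ({i : α // i ≠ j} → β) = Fintype.card β ^ (Fintype.card α - 1) := by
  rw [Fintype.card_fun]
  congr 1
  have h1 : Fintype.card {i : α // i = j} = 1 := Fintype.card_subtype_eq j
  have h2 := Fintype.card_subtype_compl (fun i : α => i = j)
  rw [h1] at h2
  exact h2

lemma card_MCt (q : ℕ) (hq : 1 ≤ q) : Fintype.card (MCt q) = q ^ q := by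
  have : Fintype.card (MCt q) = ∑ j : Fin q, Fintype.card ({i : Fin q // i ≠ j} → Fin q) := by
    unfold MCt; exact Fintype.card_sigma
  rw [this]
  have hc : ∀ j : Fin q, Fintype.card ({i : Fin q // i ≠ j} → Fin q) = q ^ (q - 1) := by
    intro j
    rw [card_punctured_fun j, Fintype.card_fin]
  rw [Finset.sum_congr rfl (fun j _ => hc j), Finset.sum_const, Finset.card_univ,
    Fintype.card_fin, smul_eq_mul]
  have : q - 1 + 1 = q := by omega
  calc q * q ^ (q - 1) = q ^ (q - 1) * q := mul_comm _ _
    _ = q ^ (q - 1 + 1) := (pow_succ q (q - 1)).symm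
    _ = q ^ q := by rw [this]

/-- Free/export matching. -/
lemma exp_free_equiv {α β γ : Type*} [Fintype α] [Fintype β] (w : α → β ⊕ γ)
    (hw : Function.Injective w) (hcard : Fintype.card α = Fintype.card β) :
    Nonempty ({m : α // ¬ ∃ b, w m = Sum.inl b} ≃ {a : β // Sum.inl a ∉ Set.range w}) := by
  classical
  have hbij : Function.Bijective (fun m : {m : α // ∃ b, w m = Sum.inl b} =>
      (⟨m.2.choose, ⟨m.1, m.2.choose_spec⟩⟩ : {a : β // Sum.inl a ∈ Set.range w})) := by
    constructor
    · intro m₁ m₂ h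
      have h1 : w m₁.1 = Sum.inl m₁.2.choose := m₁.2.choose_spec
      have h2 : w m₂.1 = Sum.inl m₂.2.choose := m₂.2.choose_spec
      have : m₁.2.choose = m₂.2.choose := congrArg Subtype.val h
      apply Subtype.ext
      exact hw (h1.trans (this ▸ h2.symm))
    · rintro ⟨a, x, hx⟩
      refine ⟨⟨x, ⟨a, hx⟩⟩, ?_⟩
      apply Subtype.ext
      have h1 : w x = Sum.inl (⟨a, hx⟩ : ∃ b, w x = Sum.inl b).choose :=
        (⟨a, hx⟩ : ∃ b, w x = Sum.inl b).choose_spec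
      exact Sum.inl.inj (h1.symm.trans hx)
  have hcL : Fintype.card {m : α // ∃ b, w m = Sum.inl b}
      = Fintype.card {a : β // Sum.inl a ∈ Set.range w} := Fintype.card_of_bijective hbij
  have hc1 : Fintype.card {m : α // ¬ ∃ b, w m = Sum.inl b}
      = Fintype.card α - Fintype.card {m : α // ∃ b, w m = Sum.inl b} :=
    Fintype.card_subtype_compl _
  have hc2 : Fintype.card {a : β // ¬ (Sum.inl a ∈ Set.range w)}
      = Fintype.card β - Fintype.card {a : β // Sum.inl a ∈ Set.range w} :=
    Fintype.card_subtype_compl _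
  refine ⟨Fintype.equivOfCardEq ?_⟩
  rw [hc1]
  have : Fintype.card {a : β // Sum.inl a ∉ Set.range w}
      = Fintype.card {a : β // ¬ (Sum.inl a ∈ Set.range w)} := rfl
  rw [this, hc2, hcL, hcard]

section Split

variable {n q : ℕ}

def aPart (hn : q ≤ n) (v : Fin n → Fin q) : Fin q → Fin q :=
  fun i => v (Fin.castLE hn i)

def bPart (_hn : q ≤ n) (v : Fin n → Fin q) : Fin (n - q) → Fin q :=
  fun i => v ⟨q + i.1, by have := i.2; omega⟩

def merge (_hn : q ≤ n) (a : Fin q → Fin q) (b : Fin (n - q) → Fin q) : Fin n → Fin q :=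
  fun i => if h : i.1 < q then a ⟨i.1, h⟩ else b ⟨i.1 - q, by have := i.2; omega⟩

lemma aPart_merge (hn : q ≤ n) (a : Fin q → Fin q) (b : Fin (n - q) → Fin q) :
    aPart hn (merge hn a b) = a := by
  funext i
  have h : (Fin.castLE hn i).1 < q := i.2
  simp only [aPart, merge, h, dif_pos]
  exact congrArg a (Fin.ext rfl)

lemma bPart_merge (hn : q ≤ n) (a : Fin q → Fin q) (b : Fin (n - q) → Fin q) :
    bPart hn (merge hn a b) = b := by
  funext i
  have h : ¬ (q + i.1 < q) := by omega
  simp only [bPart, merge, h, dif_neg]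
  exact congrArg b (Fin.ext (show q + i.1 - q = i.1 by omega))

lemma merge_split (hn : q ≤ n) (v : Fin n → Fin q) :
    merge hn (aPart hn v) (bPart hn v) = v := by
  funext i
  by_cases h : i.1 < q
  · simp only [merge, h, dif_pos, aPart]
    exact congrArg v (Fin.ext rfl)
  · simp only [merge, h, dif_neg, bPart]
    refine congrArg v (Fin.ext ?_)
    show q + (i.1 - q) = i.1
    omega

lemma merge_inj (hn : q ≤ n) {a a' : Fin q → Fin q} {b b' : Fin (n - q) → Fin q}
    (h : merge hn a b = merge hn a' b') : a = a' ∧ b = b' := by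
  constructor
  · rw [← aPart_merge hn a b, h, aPart_merge]
  · rw [← bPart_merge hn a b, h, bPart_merge]

end Split

/-- Index type for the "extra-direction" maximal cliques of `H(n,q)` (directions `≥ q`). -/
def ECt (n q : ℕ) : Type := Σ j : Fin (n - q), ({i : Fin n // i.1 ≠ q + j.1} → Fin q)
instance (n q : ℕ) : Fintype (ECt n q) := by unfold ECt; infer_instance

lemma card_ECt (n q : ℕ) (hq : 1 ≤ q) (hn : q ≤ n) :
    Fintype.card (ECt n q) = (n - q) * q ^ (n - 1) := by
  have : Fintype.card (ECt n q)
      = ∑ j : Fin (n - q), Fintype.card ({i : Fin n // i.1 ≠ q + j.1} → Fin q) := by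
    unfold ECt; exact Fintype.card_sigma
  rw [this]
  have hc : ∀ j : Fin (n - q), Fintype.card ({i : Fin n // i.1 ≠ q + j.1} → Fin q)
      = q ^ (n - 1) := by
    intro j
    have hjn : q + j.1 < n := by have := j.2; omega
    have he : Nonempty ({i : Fin n // i.1 ≠ q + j.1} ≃ {i : Fin n // i ≠ ⟨q + j.1, hjn⟩}) := by
      refine ⟨Equiv.subtypeEquivRight (fun i => ?_)⟩
      constructor
      · intro h hi; exact h (by rw [hi])
      · intro h hi; exact h (Fin.ext hi)
    obtain ⟨e⟩ := he
    rw [Fintype.card_fun, Fintype.card_congr e, ← Fintype.card_fun,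
      card_punctured_fun (⟨q + j.1, hjn⟩ : Fin n), Fintype.card_fin, Fintype.card_fin]
  rw [Finset.sum_congr rfl (fun j _ => hc j), Finset.sum_const, Finset.card_univ,
    Fintype.card_fin, smul_eq_mul]

/-- Extraction of a host system from a competition-number witness for `H(q,q)`. -/
lemma exists_gadget {q k : ℕ} (hq : 2 ≤ q)
    (D₀ : ((Fin q → Fin q) ⊕ Fin k) → ((Fin q → Fin q) ⊕ Fin k) → Prop)
    (hac : IsAcyclicDigraph D₀)
    (hcg : competitionGraph D₀ = addIsolated (hammingGraph q q) k) :
    ∃ (wM : MCt q → ((Fin q → Fin q) ⊕ Fin k)) (ρ : (Fin q → Fin q) → ℕ) (N : ℕ),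
      Function.Injective wM ∧ (∀ a, ρ a < N) ∧
      (∀ m a w, a ∈ Mcl m → wM m = Sum.inl w → ρ a < ρ w) := by
  classical
  -- adjacency transfer
  have hAdj : ∀ u v : Fin q → Fin q, (hammingGraph q q).Adj u v →
      ∃ x, D₀ (Sum.inl u) x ∧ D₀ (Sum.inl v) x := by
    intro u v h
    have h2 : (addIsolated (hammingGraph q q) k).Adj (Sum.inl u) (Sum.inl v) :=
      ⟨u, v, rfl, rfl, h⟩
    rw [← hcg] at h2
    exact h2.2
  have hBack : ∀ (u v : Fin q → Fin q) (x : (Fin q → Fin q) ⊕ Fin k), u ≠ v → D₀ (Sum.inl u) x → D₀ (Sum.inl v) x →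
      (hammingGraph q q).Adj u v := by
    intro u v x hne hu hv
    have h2 : (competitionGraph D₀).Adj (Sum.inl u) (Sum.inl v) :=
      ⟨fun h => hne (Sum.inl.inj h), x, hu, hv⟩
    rw [hcg] at h2
    obtain ⟨u', v', h1, h2', hadj⟩ := h2
    rw [Sum.inl.injEq] at h1 h2'
    rw [h1, h2']
    exact hadj
  set ord : ((Fin q → Fin q) ⊕ Fin k) → ℕ := fun x => {t | Relation.TransGen D₀ t x}.ncard with hord
  set HostSet : MCt q → Set ((Fin q → Fin q) ⊕ Fin k) := fun m =>
    {x | ∃ u v, u ≠ v ∧ u ∈ Mcl m ∧ v ∈ Mcl m ∧ D₀ (Sum.inl u) x ∧ D₀ (Sum.inl v) x} with hHS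
  have hz0 : (0 : ℕ) < q := by omega
  have hz1 : (1 : ℕ) < q := by omega
  have hne01 : (⟨0, hz0⟩ : Fin q) ≠ ⟨1, hz1⟩ := by
    intro h
    have : (0 : ℕ) = 1 := congrArg Fin.val h
    omega
  have hHSne : ∀ m, (HostSet m).Nonempty := by
    intro m
    have h0 : mcFill m ⟨0, hz0⟩ ∈ Mcl m := mcFill_mem m _
    have h1 : mcFill m ⟨1, hz1⟩ ∈ Mcl m := mcFill_mem m _
    have hne : mcFill m ⟨0, hz0⟩ ≠ mcFill m ⟨1, hz1⟩ := by
      intro h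
      have := congrFun h m.1
      rw [mcFill_at, mcFill_at] at this
      exact hne01 this
    obtain ⟨x, hx1, hx2⟩ := hAdj _ _ (Mcl_adj h0 h1 hne)
    exact ⟨x, _, _, hne, h0, h1, hx1, hx2⟩
  have hsel : ∀ m, ∃ x, x ∈ HostSet m ∧ ∀ y ∈ HostSet m, ord y ≤ ord x := by
    intro m
    obtain ⟨x, hx, hmax⟩ :=
      Set.Finite.exists_maximalFor ord (HostSet m) (Set.toFinite _) (hHSne m)
    refine ⟨x, hx, fun y hy => ?_⟩
    by_contra hle
    have h1 : ord x ≤ ord y := le_of_not_ge hle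
    exact hle (hmax hy h1)
  choose wM hmem hmax using hsel
  refine ⟨wM, fun a => ord (Sum.inl a), Fintype.card ((Fin q → Fin q) ⊕ Fin k) + 1, ?_, ?_, ?_⟩
  · -- injectivity
    intro m₁ m₂ hww
    obtain ⟨u₁, v₁, hne₁, hu₁, hv₁, du₁, dv₁⟩ := hmem m₁
    obtain ⟨u₂, v₂, hne₂, hu₂, hv₂, du₂, dv₂⟩ := hmem m₂
    refine Mcl_unique hu₁ hv₁ hne₁ hu₂ hv₂ hne₂ ?_
    intro s t hs ht
    by_cases hst : t = s
    · exact Or.inl hst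
    refine Or.inr (hBack t s (wM m₁) hst ?_ ?_)
    · rcases ht with h | h
      · rw [h, hww]; exact du₂
      · rw [h, hww]; exact dv₂
    · rcases hs with h | h
      · rw [h]; exact du₁
      · rw [h]; exact dv₁
  · -- bound
    intro a
    show ord (Sum.inl a) < _
    have h1 : ord (Sum.inl a) ≤ Fintype.card ((Fin q → Fin q) ⊕ Fin k) := by
      rw [hord]
      have := Set.ncard_le_ncard (Set.subset_univ {t | Relation.TransGen D₀ t (Sum.inl a)})
        (Set.toFinite _)
      rwa [Set.ncard_univ, Nat.card_eq_fintype_card] at this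
    omega
  · -- rank
    intro m a w ha hw
    -- partner of a inside Mcl m
    obtain ⟨c, hc⟩ : ∃ c : Fin q, c ≠ a m.1 := by
      by_cases h0 : a m.1 = ⟨0, hz0⟩
      · exact ⟨⟨1, hz1⟩, by rw [h0]; exact fun h => hne01 h.symm⟩
      · exact ⟨⟨0, hz0⟩, fun h => h0 h.symm⟩
    set b : Fin q → Fin q := Function.update a m.1 c with hb
    have hbm : b ∈ Mcl m := by
      refine mem_Mcl_of_agree ha (fun i hi => ?_)
      rw [hb]; exact Function.update_of_ne hi c a
    have hab : a ≠ b := by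
      intro h
      have := congrFun h m.1
      rw [hb, Function.update_self] at this
      exact hc this.symm
    obtain ⟨x, hx1, hx2⟩ := hAdj a b (Mcl_adj ha hbm hab)
    have hxm : x ∈ HostSet m := ⟨a, b, hab, ha, hbm, hx1, hx2⟩
    have h1 : ord (Sum.inl a) < ord x := ord_lt_of_arc hac hx1
    have h2 : ord x ≤ ord (wM m) := hmax m x hxm
    have h3 : ord (wM m) = ord (Sum.inl w) := by rw [hw]
    show ord (Sum.inl a) < ord (Sum.inl w)
    omega


lemma exists_inr {α β : Type*} {x : α ⊕ β} (h : ¬ ∃ a, x = Sum.inl a) : ∃ b, x = Sum.inr b := by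
  cases x with
  | inl a => exact absurd ⟨a, rfl⟩ h
  | inr b => exact ⟨b, rfl⟩

section Big
variable {n q k K : ℕ}

/-- Clique system for `H(n,q)`: extra-direction maximal cliques, and per-slice copies of the
maximal cliques of `H(q,q)`. -/
def bigCl (hn : q ≤ n) (c : ECt n q ⊕ (MCt q × Fin (q ^ (n - q)))) : Set (Fin n → Fin q) :=
  match c with
  | .inl e => {v | ∀ i, ∀ h : i.1 ≠ q + e.1.1, v i = e.2 ⟨i, h⟩}
  | .inr mt => {v | finFunctionFinEquiv (bPart hn v) = mt.2 ∧ aPart hn v ∈ Mcl mt.1}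

/-- Host assignment for the clique system. -/
noncomputable def bigHost (hn : q ≤ n) (wM : MCt q → (Fin q → Fin q) ⊕ Fin k)
    (ff : {m : MCt q // ¬ ∃ w, wM m = Sum.inl w} → (Fin q → Fin q))
    (toK : ECt n q ⊕ Fin k → Fin K)
    (c : ECt n q ⊕ (MCt q × Fin (q ^ (n - q)))) : (Fin n → Fin q) ⊕ Fin K :=
  match c with
  | .inl e => Sum.inr (toK (Sum.inl e))
  | .inr (m, t) =>
    if hL : ∃ w, wM m = Sum.inl w then
      Sum.inl (merge hn hL.choose (finFunctionFinEquiv.symm t))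
    else if ht : t.1 + 1 < q ^ (n - q) then
      Sum.inl (merge hn (ff ⟨m, hL⟩) (finFunctionFinEquiv.symm ⟨t.1 + 1, ht⟩))
    else Sum.inr (toK (Sum.inr (exists_inr hL).choose))

variable (hn : q ≤ n) (wM : MCt q → (Fin q → Fin q) ⊕ Fin k)
    (ff : {m : MCt q // ¬ ∃ w, wM m = Sum.inl w} → (Fin q → Fin q))
    (toK : ECt n q ⊕ Fin k → Fin K)

lemma bigHost_inj (hwM : Function.Injective wM)
    (hff : ∀ x, Sum.inl (ff x) ∉ Set.range wM)
    (hffinj : Function.Injective ff)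
    (htoK : Function.Injective toK) :
    Function.Injective (bigHost hn wM ff toK) := by
  have hfree : ∀ (x) (m : MCt q) (w), wM m = Sum.inl w → w ≠ ff x := by
    intro x m w hw hcontra
    exact hff x ⟨m, by rw [hw, hcontra]⟩
  have hshape : ∀ (m : MCt q) (t : Fin (q ^ (n - q))),
      (∃ w', bigHost hn wM ff toK (.inr (m, t)) = Sum.inl w') ∨
      (∃ κ, bigHost hn wM ff toK (.inr (m, t)) = Sum.inr (toK (Sum.inr κ))) := by
    intro m t
    simp only [bigHost]
    split_ifs
    · exact Or.inl ⟨_, rfl⟩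
    · exact Or.inl ⟨_, rfl⟩
    · exact Or.inr ⟨_, rfl⟩
  intro c₁ c₂ h
  match c₁, c₂ with
  | .inl e₁, .inl e₂ =>
    simp only [bigHost] at h
    have := htoK (Sum.inr.inj h)
    rw [Sum.inl.inj this]
  | .inl e₁, .inr (m₂, t₂) =>
    exfalso
    rcases hshape m₂ t₂ with ⟨w', hw⟩ | ⟨κ, hw⟩
    · rw [hw] at h
      simp only [bigHost] at h
      exact nomatch h
    · rw [hw] at h
      simp only [bigHost] at h
      have := htoK (Sum.inr.inj h)
      exact nomatch this
  | .inr (m₁, t₁), .inl e₂ =>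
    exfalso
    rcases hshape m₁ t₁ with ⟨w', hw⟩ | ⟨κ, hw⟩
    · rw [hw] at h
      simp only [bigHost] at h
      exact nomatch h
    · rw [hw] at h
      simp only [bigHost] at h
      have := htoK (Sum.inr.inj h)
      exact nomatch this
  | .inr (m₁, t₁), .inr (m₂, t₂) =>
    simp only [bigHost] at h
    by_cases hL₁ : ∃ w, wM m₁ = Sum.inl w <;> by_cases hL₂ : ∃ w, wM m₂ = Sum.inl w
    · rw [dif_pos hL₁, dif_pos hL₂] at h
      obtain ⟨ha, hb⟩ := merge_inj hn (Sum.inl.inj h)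
      have hm : m₁ = m₂ := hwM (hL₁.choose_spec.trans (ha ▸ hL₂.choose_spec.symm))
      have htt : t₁ = t₂ := finFunctionFinEquiv.symm.injective hb
      rw [hm, htt]
    · rw [dif_pos hL₁, dif_neg hL₂] at h
      by_cases ht₂ : t₂.1 + 1 < q ^ (n - q)
      · rw [dif_pos ht₂] at h
        obtain ⟨ha, _⟩ := merge_inj hn (Sum.inl.inj h)
        exact (hfree ⟨m₂, hL₂⟩ m₁ _ hL₁.choose_spec ha).elim
      · rw [dif_neg ht₂] at h
        exact nomatch h
    · rw [dif_neg hL₁, dif_pos hL₂] at h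
      by_cases ht₁ : t₁.1 + 1 < q ^ (n - q)
      · rw [dif_pos ht₁] at h
        obtain ⟨ha, _⟩ := merge_inj hn (Sum.inl.inj h)
        exact (hfree ⟨m₁, hL₁⟩ m₂ _ hL₂.choose_spec ha.symm).elim
      · rw [dif_neg ht₁] at h
        exact nomatch h
    · rw [dif_neg hL₁, dif_neg hL₂] at h
      by_cases ht₁ : t₁.1 + 1 < q ^ (n - q) <;> by_cases ht₂ : t₂.1 + 1 < q ^ (n - q)
      · rw [dif_pos ht₁, dif_pos ht₂] at h
        obtain ⟨ha, hb⟩ := merge_inj hn (Sum.inl.inj h)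
        have hm : m₁ = m₂ := congrArg Subtype.val (hffinj ha)
        have hb2 := finFunctionFinEquiv.symm.injective hb
        have htt : t₁ = t₂ := Fin.ext (by
          have := congrArg Fin.val hb2
          simpa using this)
        rw [hm, htt]
      · rw [dif_pos ht₁, dif_neg ht₂] at h
        exact nomatch h
      · rw [dif_neg ht₁, dif_pos ht₂] at h
        exact nomatch h
      · rw [dif_neg ht₁, dif_neg ht₂] at h
        have h2 := Sum.inr.inj (htoK (Sum.inr.inj h))
        have hm : m₁ = m₂ := by
          apply hwM
          rw [(exists_inr hL₁).choose_spec, (exists_inr hL₂).choose_spec, h2]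
        have htt : t₁ = t₂ := by
          apply Fin.ext
          have h1 := t₁.2
          have h2' := t₂.2
          omega
        rw [hm, htt]

lemma bigCl_clique : ∀ c, (hammingGraph n q).IsClique (bigCl hn c) := by
  intro c
  match c with
  | .inl e =>
    intro u hu v hv hne
    have hjn : q + e.1.1 < n := by have := e.1.2; omega
    refine ham_adj_of ⟨q + e.1.1, hjn⟩ hne (fun i hi => ?_)
    have hiv : i.1 ≠ q + e.1.1 := fun h => hi (Fin.ext h)
    rw [hu i hiv, hv i hiv]
  | .inr (m, t) =>
    intro u hu v hv hne
    obtain ⟨hu1, hu2⟩ := hu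
    obtain ⟨hv1, hv2⟩ := hv
    have hb : bPart hn u = bPart hn v :=
      finFunctionFinEquiv.injective (hu1.trans hv1.symm)
    have hjq : m.1.1 < n := lt_of_lt_of_le m.1.2 hn
    refine ham_adj_of ⟨m.1.1, hjq⟩ hne (fun i hi => ?_)
    by_cases hcase : i.1 < q
    · have hia : (⟨i.1, hcase⟩ : Fin q) ≠ m.1 := by
        intro h
        have hval : i.1 = m.1.1 := congrArg Fin.val h
        exact hi (Fin.ext hval)
      have h1 : u i = aPart hn u ⟨i.1, hcase⟩ := congrArg u (Fin.ext rfl)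
      have h2 : v i = aPart hn v ⟨i.1, hcase⟩ := congrArg v (Fin.ext rfl)
      rw [h1, h2]
      exact Mcl_agree hu2 hv2 hia
    · have hle : q + (i.1 - q) = i.1 := by omega
      have h1 : u i = bPart hn u ⟨i.1 - q, by have := i.2; omega⟩ :=
        congrArg u (Fin.ext hle.symm)
      have h2 : v i = bPart hn v ⟨i.1 - q, by have := i.2; omega⟩ :=
        congrArg v (Fin.ext hle.symm)
      rw [h1, h2, hb]

lemma bigCl_cover : ∀ u v, (hammingGraph n q).Adj u v →
    ∃ c, u ∈ bigCl hn c ∧ v ∈ bigCl hn c := by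
  intro u v hadj
  obtain ⟨j, hj, hoff⟩ := ham_exists_of_adj hadj
  by_cases hcase : j.1 < q
  · -- same slice, base clique
    refine ⟨.inr (mcOf ⟨j.1, hcase⟩ (aPart hn u), finFunctionFinEquiv (bPart hn u)), ?_, ?_⟩
    · exact ⟨rfl, mem_mcOf _ _⟩
    · constructor
      · have : bPart hn v = bPart hn u := by
          funext i
          refine (hoff ⟨q + i.1, by have := i.2; omega⟩ (fun h => ?_)).symm
          have : q + i.1 = j.1 := congrArg Fin.val h
          omega
        rw [this]
      · refine mem_mcOf_of_agree (fun i hi => ?_)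
        show v (Fin.castLE hn i) = u (Fin.castLE hn i)
        refine (hoff (Fin.castLE hn i) (fun h => ?_)).symm
        refine hi (Fin.ext ?_)
        have : i.1 = j.1 := congrArg Fin.val h
        simpa using this
  · -- extra-direction clique
    have hjq : j.1 - q < n - q := by have := j.2; omega
    refine ⟨.inl ⟨⟨j.1 - q, hjq⟩, fun i => u i.1⟩, ?_, ?_⟩
    · intro i hi
      rfl
    · intro i hi
      show v i = u i
      refine (hoff i (fun h => ?_)).symm
      refine hi ?_
      have hh : i.1 = j.1 := congrArg Fin.val h
      show i.1 = q + (j.1 - q)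
      omega

lemma bigHost_rank (ρA : (Fin q → Fin q) → ℕ) (N : ℕ) (hρA : ∀ a, ρA a < N)
    (hrankA : ∀ m a w, a ∈ Mcl m → wM m = Sum.inl w → ρA a < ρA w) :
    ∀ c u w, u ∈ bigCl hn c → bigHost hn wM ff toK c = Sum.inl w →
      (finFunctionFinEquiv (bPart hn u)).1 * N + ρA (aPart hn u) <
      (finFunctionFinEquiv (bPart hn w)).1 * N + ρA (aPart hn w) := by
  intro c u w hu hw
  match c with
  | .inl e => exact absurd hw (by simp [bigHost])
  | .inr (m, t) =>
    obtain ⟨hu1, hu2⟩ := hu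
    have hu1' : finFunctionFinEquiv (bPart hn u) = t := hu1
    have hu2' : aPart hn u ∈ Mcl m := hu2
    simp only [bigHost] at hw
    split_ifs at hw with hL ht
    · -- same slice, wM-host
      have hw' := Sum.inl.inj hw
      have hwa : aPart hn w = hL.choose := by rw [← hw', aPart_merge]
      have hwb : bPart hn w = finFunctionFinEquiv.symm t := by rw [← hw', bPart_merge]
      have h1 : finFunctionFinEquiv (bPart hn w) = t := by
        rw [hwb, Equiv.apply_symm_apply]
      have h2 : ρA (aPart hn u) < ρA (aPart hn w) := by
        rw [hwa]
        exact hrankA m _ _ hu2' hL.choose_spec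
      rw [hu1', h1]
      omega
    · -- next slice, free host
      have hw' := Sum.inl.inj hw
      have hwb : bPart hn w = finFunctionFinEquiv.symm ⟨t.1 + 1, ht⟩ := by
        rw [← hw', bPart_merge]
      have h1 : (finFunctionFinEquiv (bPart hn w)).1 = t.1 + 1 := by
        rw [hwb, Equiv.apply_symm_apply]
      rw [hu1', h1]
      have h2 := hρA (aPart hn u)
      have h3 : t.1 * N + N ≤ (t.1 + 1) * N := by rw [Nat.succ_mul]
      omega

end Big

lemma qq_set_nonempty (q : ℕ) (hq : 2 ≤ q) :
    {k | ∃ D : ((Fin q → Fin q) ⊕ Fin k) → ((Fin q → Fin q) ⊕ Fin k) → Prop,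
      IsAcyclicDigraph D ∧ competitionGraph D = addIsolated (hammingGraph q q) k}.Nonempty := by
  classical
  refine ⟨q * q ^ q, ?_⟩
  obtain ⟨e⟩ : Nonempty (Fin q × (Fin q → Fin q) ≃ Fin (q * q ^ q)) :=
    ⟨Fintype.equivOfCardEq (by simp [Fintype.card_fun])⟩
  exact realize_of_cover (hammingGraph q q) (q * q ^ q)
    (fun c => {a | ∀ i, i ≠ c.1 → a i = c.2 i})
    (fun c => Sum.inr (e c))
    (by intro c₁ c₂ h; exact e.injective (Sum.inr.inj h))
    (by
      intro c a ha b hb hne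
      exact ham_adj_of c.1 hne (fun i hi => (ha i hi).trans (hb i hi).symm))
    (by
      intro u v hadj
      obtain ⟨j, hj, hoff⟩ := ham_exists_of_adj hadj
      exact ⟨(j, u), fun i hi => rfl, fun i hi => (hoff i hi).symm⟩)
    (fun _ => 0) 1 (fun _ => by norm_num)
    (by intro c u w _ h; exact nomatch h)

lemma hnq_mem (n q k : ℕ) (hq : 2 ≤ q) (hn : q ≤ n)
    (hk : ∃ D : ((Fin q → Fin q) ⊕ Fin k) → ((Fin q → Fin q) ⊕ Fin k) → Prop,
      IsAcyclicDigraph D ∧ competitionGraph D = addIsolated (hammingGraph q q) k) :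
    ∃ D : ((Fin n → Fin q) ⊕ Fin ((n - q) * q ^ (n - 1) + k)) →
        ((Fin n → Fin q) ⊕ Fin ((n - q) * q ^ (n - 1) + k)) → Prop,
      IsAcyclicDigraph D ∧
      competitionGraph D = addIsolated (hammingGraph n q) ((n - q) * q ^ (n - 1) + k) := by
  classical
  obtain ⟨D₀, hac, hcg⟩ := hk
  obtain ⟨wM, ρA, N, hwM, hρA, hrankA⟩ := exists_gadget hq D₀ hac hcg
  have hcardMC : Fintype.card (MCt q) = Fintype.card (Fin q → Fin q) := by
    rw [card_MCt q (by omega)]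
    simp [Fintype.card_fun]
  obtain ⟨e2f⟩ := exp_free_equiv wM hwM hcardMC
  have hff : ∀ x, Sum.inl ((fun x => (e2f x).1) x) ∉ Set.range wM := fun x => (e2f x).2
  have hffinj : Function.Injective (fun x : {m : MCt q // ¬ ∃ w, wM m = Sum.inl w} =>
      (e2f x).1) := fun x y h => e2f.injective (Subtype.ext h)
  obtain ⟨eK⟩ : Nonempty ((ECt n q ⊕ Fin k) ≃ Fin ((n - q) * q ^ (n - 1) + k)) := by
    refine ⟨Fintype.equivOfCardEq ?_⟩
    rw [Fintype.card_sum, card_ECt n q (by omega) hn, Fintype.card_fin, Fintype.card_fin]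
  exact realize_of_cover (hammingGraph n q) ((n - q) * q ^ (n - 1) + k)
    (bigCl hn) (bigHost hn wM (fun x => (e2f x).1) eK)
    (bigHost_inj hn wM (fun x => (e2f x).1) eK hwM hff hffinj eK.injective)
    (bigCl_clique hn)
    (bigCl_cover hn)
    (fun v => (finFunctionFinEquiv (bPart hn v)).1 * N + ρA (aPart hn v))
    (q ^ (n - q) * N)
    (by
      intro v
      show (finFunctionFinEquiv (bPart hn v)).1 * N + ρA (aPart hn v) < q ^ (n - q) * N
      have h1 : (finFunctionFinEquiv (bPart hn v)).1 < q ^ (n - q) :=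
        (finFunctionFinEquiv (bPart hn v)).2
      have h2 := hρA (aPart hn v)
      have h3 : ((finFunctionFinEquiv (bPart hn v)).1 + 1) * N ≤ q ^ (n - q) * N :=
        Nat.mul_le_mul_right N (by omega)
      have h4 : (finFunctionFinEquiv (bPart hn v)).1 * N + N
          = ((finFunctionFinEquiv (bPart hn v)).1 + 1) * N := (Nat.succ_mul _ _).symm
      omega)
    (bigHost_rank hn wM (fun x => (e2f x).1) eK ρA N hρA hrankA)

theorem competitionNumber_Hnq_upper (n q : ℕ) (hq : 2 ≤ q) (hn : q ≤ n) :
    competitionNumber (hammingGraph n q) ≤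
      (n - q) * q ^ (n - 1) + competitionNumber (hammingGraph q q) := by
  have hne := qq_set_nonempty q hq
  have hmem := Nat.sInf_mem hne
  have hmem2 := hnq_mem n q _ hq hn hmem
  exact Nat.sInf_le hmem2
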